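/- For every integer m ≥ 3, the number of DWBC3 configurations of the 20V model on T_m whose statistic equals m (i.e. the leading coefficient, the coefficient of τ^{m−1}, of the refined generating polynomial Z_m^{20V3}(τ)) equals the total number Z_{m−2}^{20V3} of DWBC3 configurations on T_{m−2}. -/

import Mathlib

open Real

namespace TwentyV

/-- The three edge directions of the triangular lattice: `(1,0)`, `(0,1)`, `(1,-1)`. -/
def dir : Fin 3 → ℤ × ℤ := ![(1, 0), (0, 1), (1, -1)]

/-- The triangular domain `T_m`: vertices `(x,y)` with `x ≤ 0`, `y ≤ m-1`, `x+y ≥ 0`. -/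
def Tri (m : ℕ) : Set (ℤ × ℤ) := {v | v.1 ≤ 0 ∧ v.2 ≤ (m : ℤ) - 1 ∧ 0 ≤ v.1 + v.2}

/-- An orientation of the edges of the triangular lattice: the edge joining `v` and
`v + dir d` is recorded at base point `v`, and the value `true` means that it is
oriented from `v` towards `v + dir d`. -/
abbrev Orientation := ℤ × ℤ → Fin 3 → Bool

/-- The edge `(v, d)` is incident to the triangle `T_m`. -/
def Incident (m : ℕ) (v : ℤ × ℤ) (d : Fin 3) : Prop := v ∈ Tri m ∨ v + dir d ∈ Tri m

/-- The number of edges incoming at the vertex `u`. -/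
def inDeg (o : Orientation) (u : ℤ × ℤ) : ℕ :=
  (Finset.univ.filter fun d : Fin 3 => o (u - dir d) d = true).card +
    (Finset.univ.filter fun d : Fin 3 => o u d = false).card

/-- Ice rule: every vertex of `T_m` has exactly three incoming (hence three
outgoing) incident edges. -/
def IceRule (m : ℕ) (o : Orientation) : Prop := ∀ u ∈ Tri m, inDeg o u = 3

/-- DWBC3 boundary conditions on `T_m`: all East boundary half-edges (at vertices
`(0,y)`) point into the domain, all North boundary half-edges (at vertices
`(x,m-1)`) point out of the domain, and the diagonal boundary half-edges (at
vertices `(-y,y)`) point into the domain on the upper half and out of it on the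
lower half (for odd `m` the central vertex gets one incoming and one outgoing
half-edge).  In addition, all edges not incident to `T_m` are normalized to
`true`, so that the set of configurations is finite. -/
def DWBC3 (m : ℕ) (o : Orientation) : Prop :=
  (∀ y : ℤ, 0 ≤ y → y ≤ (m : ℤ) - 1 → o (0, y) 0 = false ∧ o (0, y) 2 = false) ∧
  (∀ x : ℤ, 1 - (m : ℤ) ≤ x → x ≤ 0 →
      o (x, (m : ℤ) - 1) 1 = true ∧ o (x - 1, (m : ℤ)) 2 = false) ∧
  (∀ y : ℤ, 0 ≤ y → y ≤ (m : ℤ) - 1 →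
      (o (-y - 1, y) 0 = true ↔ (m : ℤ) - 1 ≤ 2 * y) ∧
      (o (-y, y - 1) 1 = true ↔ (m : ℤ) ≤ 2 * y)) ∧
  (∀ v d, ¬ Incident m v d → o v d = true)

/-- The set of 20V configurations with DWBC3 on `T_m`. -/
def Config (m : ℕ) : Set Orientation := {o | IceRule m o ∧ DWBC3 m o}

/-- `Z_m^{20V3}`: the number of 20V configurations with DWBC3 on `T_m`. -/
noncomputable def Z (m : ℕ) : ℕ := (Config m).ncard

end TwentyV
namespace TwentyV

/-- The edge `(v, d)` is occupied by an osculating Schröder path step: under the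
standard bijection, horizontal edges are traversed rightwards (step `(1,0)`),
vertical edges downwards (step `(0,-1)`), diagonal edges down-rightwards
(step `(1,-1)`). -/
def Occupied (o : Orientation) (v : ℤ × ℤ) (d : Fin 3) : Prop :=
  if d = 1 then o v d = false else o v d = true

/-- The vertex `u` is visited by a path, i.e. some incident edge is occupied. -/
def Visited (o : Orientation) (u : ℤ × ℤ) : Prop :=
  ∃ d : Fin 3, Occupied o (u - dir d) d ∨ Occupied o u d

/-- The statistic of the configuration `o` equals `k`: the topmost vertex on the
East boundary line `x = 0` visited by a path is `(0, k-1)`, i.e. has position `k`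
counted from the bottom. -/
def HasStat (m : ℕ) (o : Orientation) (k : ℕ) : Prop :=
  Visited o (0, (k : ℤ) - 1) ∧
    ∀ j : ℤ, (k : ℤ) - 1 < j → j ≤ (m : ℤ) - 1 → ¬ Visited o (0, j)

/-- The refined number `Z_{m,k}^{20V3}` of DWBC3 configurations with statistic `k`. -/
noncomputable def Zref (m k : ℕ) : ℕ := {o ∈ Config m | HasStat m o k}.ncard

/-- The refined generating polynomial `Z_m^{20V3}(τ) = ∑_{k=1}^m Z_{m,k}^{20V3} τ^{k-1}`. -/
noncomputable def Zpoly (m : ℕ) (τ : ℝ) : ℝ :=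
  ∑ k ∈ Finset.Icc 1 m, (Zref m k : ℝ) * τ ^ (k - 1)

end TwentyV

namespace TwentyV

lemma inDeg_eq (o : Orientation) (x y : ℤ) :
    inDeg o (x, y) =
      (if o (x-1, y) 0 = true then 1 else 0) + (if o (x, y-1) 1 = true then 1 else 0) +
      (if o (x-1, y+1) 2 = true then 1 else 0) +
      ((if o (x, y) 0 = false then 1 else 0) + (if o (x, y) 1 = false then 1 else 0) +
       (if o (x, y) 2 = false then 1 else 0)) := by
  have h0 : (x, y) - dir 0 = (x-1, y) := by simp [dir, Prod.ext_iff]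
  have h1 : (x, y) - dir 1 = (x, y-1) := by simp [dir, Prod.ext_iff]
  have h2 : (x, y) - dir 2 = (x-1, y+1) := by simp [dir, Prod.ext_iff]
  rw [inDeg, Finset.card_filter, Finset.card_filter, Fin.sum_univ_three, Fin.sum_univ_three,
    h0, h1, h2]

lemma mem_tri (m : ℕ) (x y : ℤ) : (x, y) ∈ Tri m ↔ x ≤ 0 ∧ y ≤ (m:ℤ) - 1 ∧ 0 ≤ x + y :=
  Iff.rfl

lemma incident0 (m : ℕ) (x y : ℤ) :
    Incident m (x, y) 0 ↔ ((x ≤ 0 ∧ y ≤ (m:ℤ)-1 ∧ 0 ≤ x+y) ∨ (x+1 ≤ 0 ∧ y ≤ (m:ℤ)-1 ∧ 0 ≤ x+1+y)) := by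
  simp [Incident, Tri, dir, Set.mem_setOf_eq, Prod.ext_iff]

lemma incident1 (m : ℕ) (x y : ℤ) :
    Incident m (x, y) 1 ↔ ((x ≤ 0 ∧ y ≤ (m:ℤ)-1 ∧ 0 ≤ x+y) ∨ (x ≤ 0 ∧ y+1 ≤ (m:ℤ)-1 ∧ 0 ≤ x+(y+1))) := by
  simp [Incident, Tri, dir, Set.mem_setOf_eq, Prod.ext_iff]

lemma incident2 (m : ℕ) (x y : ℤ) :
    Incident m (x, y) 2 ↔ ((x ≤ 0 ∧ y ≤ (m:ℤ)-1 ∧ 0 ≤ x+y) ∨ (x+1 ≤ 0 ∧ y-1 ≤ (m:ℤ)-1 ∧ 0 ≤ (x+1)+(y-1))) := by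
  simp [Incident, Tri, dir, Set.mem_setOf_eq, Prod.ext_iff] <;> omega

lemma fin3 (d : Fin 3) : d = 0 ∨ d = 1 ∨ d = 2 := by fin_cases d <;> simp

/-- ice equation in arithmetic form at vertex (x,y) of T_m -/
lemma ice_at {m : ℕ} {o : Orientation} (hIce : IceRule m o) {x y : ℤ}
    (h : x ≤ 0 ∧ y ≤ (m:ℤ) - 1 ∧ 0 ≤ x + y) :
    (if o (x-1, y) 0 = true then 1 else 0) + (if o (x, y-1) 1 = true then 1 else 0) +
      (if o (x-1, y+1) 2 = true then 1 else 0) +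
      ((if o (x, y) 0 = false then 1 else 0) + (if o (x, y) 1 = false then 1 else 0) +
       (if o (x, y) 2 = false then 1 else 0)) = 3 := by
  rw [← inDeg_eq]; exact hIce (x, y) h

lemma seed {m : ℕ} (hm : 3 ≤ m) {o : Orientation} (hC : o ∈ Config m)
    (hV : Visited o (0, (m:ℤ)-1)) :
    o (-1, (m:ℤ)-1) 0 = true ∧ o (0, (m:ℤ)-2) 1 = false := by
  obtain ⟨hIce, hE, hN, hD, hZ⟩ := hC
  have h1 : o (0, (m:ℤ)-1) 0 = false := (hE _ (by omega) (by omega)).1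
  have h2 : o (0, (m:ℤ)-1) 2 = false := (hE _ (by omega) (by omega)).2
  have h3 : o (0, (m:ℤ)-1) 1 = true := by
    have := (hN 0 (by omega) (by omega)).1; simpa using this
  have h4 : o (-1, (m:ℤ)) 2 = false := by
    have := (hN 0 (by omega) (by omega)).2; simpa using this
  have hice := ice_at hIce (x := 0) (y := (m:ℤ)-1) (by omega)
  rw [h1, h2, h3] at hice
  rw [show (0:ℤ)-1 = -1 by norm_num, show (m:ℤ)-1-1 = (m:ℤ)-2 by ring,
    show (m:ℤ)-1+1 = (m:ℤ) by ring, h4] at hice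
  obtain ⟨d, hd⟩ := hV
  have hsub0 : ((0:ℤ), (m:ℤ)-1) - dir 0 = (-1, (m:ℤ)-1) := by simp [dir, Prod.ext_iff]
  have hsub1 : ((0:ℤ), (m:ℤ)-1) - dir 1 = (0, (m:ℤ)-2) := by
    simp [dir, Prod.ext_iff]; ring
  have hsub2 : ((0:ℤ), (m:ℤ)-1) - dir 2 = (-1, (m:ℤ)) := by
    simp [dir, Prod.ext_iff] <;> ring
  fin_cases d
  · replace hd : o ((0, (m:ℤ)-1) - dir 0) 0 = true ∨ o ((0:ℤ), (m:ℤ)-1) 0 = true := hd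
    rw [hsub0, h1] at hd
    norm_num at hd
    rw [hd] at hice
    refine ⟨hd, ?_⟩
    rcases Bool.eq_false_or_eq_true (o (0, (m:ℤ)-2) 1) with h | h
    · rw [h] at hice; simp at hice
    · exact h
  · replace hd : o ((0, (m:ℤ)-1) - dir 1) 1 = false ∨ o ((0:ℤ), (m:ℤ)-1) 1 = false := hd
    rw [hsub1, h3] at hd
    norm_num at hd
    rw [hd] at hice
    refine ⟨?_, hd⟩
    rcases Bool.eq_false_or_eq_true (o (-1, (m:ℤ)-1) 0) with h | h
    · exact h
    · rw [h] at hice; simp at hice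
  · replace hd : o ((0, (m:ℤ)-1) - dir 2) 2 = true ∨ o ((0:ℤ), (m:ℤ)-1) 2 = true := hd
    rw [hsub2, h4, h2] at hd
    norm_num at hd

lemma colStep {m : ℕ} (hm : 3 ≤ m) {o : Orientation} (hC : o ∈ Config m)
    {y : ℤ} (hy0 : 0 ≤ y) (hy1 : y ≤ (m:ℤ)-2) (hb : o (0, y) 1 = false) :
    o (-1, y) 0 = false ∧ o (0, y-1) 1 = false ∧ o (-1, y+1) 2 = false := by
  obtain ⟨hIce, hE, hN, hD, hZ⟩ := hC
  have h1 : o (0, y) 0 = false := (hE _ (by omega) (by omega)).1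
  have h2 : o (0, y) 2 = false := (hE _ (by omega) (by omega)).2
  have hice := ice_at hIce (x := 0) (y := y) (by omega)
  rw [h1, h2, hb, show (0:ℤ)-1 = -1 by norm_num] at hice
  rcases Bool.eq_false_or_eq_true (o (-1, y) 0) with ha | ha <;> rw [ha] at hice <;>
    rcases Bool.eq_false_or_eq_true (o (0, y-1) 1) with hb' | hb' <;> rw [hb'] at hice <;>
    rcases Bool.eq_false_or_eq_true (o (-1, y+1) 2) with hc | hc <;> rw [hc] at hice <;>
    simp at hice <;> exact ⟨ha, hb', hc⟩

lemma rowStep {m : ℕ} (hm : 3 ≤ m) {o : Orientation} (hC : o ∈ Config m)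
    {x : ℤ} (hx0 : 1-(m:ℤ) ≤ x) (hx1 : x ≤ -1) (hp : o (x, (m:ℤ)-1) 0 = true) :
    o (x-1, (m:ℤ)-1) 0 = true ∧ o (x, (m:ℤ)-2) 1 = true ∧ o (x, (m:ℤ)-1) 2 = false := by
  obtain ⟨hIce, hE, hN, hD, hZ⟩ := hC
  have h1 : o (x, (m:ℤ)-1) 1 = true := (hN x (by omega) (by omega)).1
  have h2 : o (x-1, (m:ℤ)) 2 = false := (hN x (by omega) (by omega)).2
  have hice := ice_at hIce (x := x) (y := (m:ℤ)-1) (by omega)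
  rw [h1, hp, show (m:ℤ)-1-1 = (m:ℤ)-2 by ring, show (m:ℤ)-1+1 = (m:ℤ) by ring, h2] at hice
  rcases Bool.eq_false_or_eq_true (o (x-1, (m:ℤ)-1) 0) with ha | ha <;> rw [ha] at hice <;>
    rcases Bool.eq_false_or_eq_true (o (x, (m:ℤ)-2) 1) with hb | hb <;> rw [hb] at hice <;>
    rcases Bool.eq_false_or_eq_true (o (x, (m:ℤ)-1) 2) with hc | hc <;> rw [hc] at hice <;>
    simp at hice <;> exact ⟨ha, hb, hc⟩

lemma fr_b {m : ℕ} (hm : 3 ≤ m) {o : Orientation} (hC : o ∈ Config m)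
    (hV : Visited o (0, (m:ℤ)-1)) :
    ∀ y : ℤ, -1 ≤ y → y ≤ (m:ℤ)-2 → o (0, y) 1 = false := by
  have key : ∀ n : ℕ, (n:ℤ) ≤ (m:ℤ)-2 → o (0, (m:ℤ)-2-(n:ℤ)) 1 = false := by
    intro n
    induction n with
    | zero => intro _; simpa using (seed hm hC hV).2
    | succ k ih =>
      intro h
      push_cast at h ⊢
      have hb := ih (by omega)
      have := (colStep hm hC (y := (m:ℤ)-2-(k:ℤ)) (by omega) (by omega) hb).2.1
      rw [show (m:ℤ)-2-((k:ℤ)+1) = ((m:ℤ)-2-(k:ℤ))-1 by ring]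
      exact this
  intro y hy0 hy1
  rcases eq_or_lt_of_le hy0 with h | h
  · obtain ⟨hIce, hE, hN, hD, hZ⟩ := hC
    have := (hD 0 (by omega) (by omega)).2
    simp only [neg_zero] at this
    rw [← h]
    rcases Bool.eq_false_or_eq_true (o (0, (-1:ℤ)) 1) with hh | hh
    · exact absurd (this.mp (by rw [show (0:ℤ)-1 = -1 by norm_num]; exact hh)) (by omega)
    · exact hh
  · have := key ((m:ℤ)-2-y).toNat (by omega)
    rwa [show ((((m:ℤ)-2-y).toNat : ℤ)) = (m:ℤ)-2-y by omega,
      show (m:ℤ)-2-((m:ℤ)-2-y) = y by ring] at this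

lemma fr_a {m : ℕ} (hm : 3 ≤ m) {o : Orientation} (hC : o ∈ Config m)
    (hV : Visited o (0, (m:ℤ)-1)) :
    ∀ y : ℤ, 0 ≤ y → y ≤ (m:ℤ)-2 → o (-1, y) 0 = false := by
  intro y h0 h1
  exact (colStep hm hC h0 h1 (fr_b hm hC hV y (by omega) h1)).1

lemma fr_c {m : ℕ} (hm : 3 ≤ m) {o : Orientation} (hC : o ∈ Config m)
    (hV : Visited o (0, (m:ℤ)-1)) :
    ∀ y : ℤ, 1 ≤ y → y ≤ (m:ℤ)-1 → o (-1, y) 2 = false := by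
  intro y h0 h1
  have := (colStep hm hC (y := y-1) (by omega) (by omega)
    (fr_b hm hC hV (y-1) (by omega) (by omega))).2.2
  rwa [show y-1+1 = y by ring] at this

lemma fr_p {m : ℕ} (hm : 3 ≤ m) {o : Orientation} (hC : o ∈ Config m)
    (hV : Visited o (0, (m:ℤ)-1)) :
    ∀ x : ℤ, -(m:ℤ) ≤ x → x ≤ -1 → o (x, (m:ℤ)-1) 0 = true := by
  have key : ∀ n : ℕ, (n:ℤ) ≤ (m:ℤ)-1 → o (-1-(n:ℤ), (m:ℤ)-1) 0 = true := by
    intro n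
    induction n with
    | zero => intro _; simpa using (seed hm hC hV).1
    | succ k ih =>
      intro h
      push_cast at h ⊢
      have hp := ih (by omega)
      have := (rowStep hm hC (x := -1-(k:ℤ)) (by omega) (by omega) hp).1
      rw [show -1-((k:ℤ)+1) = (-1-(k:ℤ))-1 by ring]
      exact this
  intro x h0 h1
  have := key (-1-x).toNat (by omega)
  rwa [show (((-1-x).toNat : ℤ)) = -1-x by omega, show -1-(-1-x) = x by ring] at this

lemma fr_q {m : ℕ} (hm : 3 ≤ m) {o : Orientation} (hC : o ∈ Config m)
    (hV : Visited o (0, (m:ℤ)-1)) :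
    ∀ x : ℤ, 1-(m:ℤ) ≤ x → x ≤ -1 → o (x, (m:ℤ)-2) 1 = true := by
  intro x h0 h1
  exact (rowStep hm hC h0 h1 (fr_p hm hC hV x (by omega) h1)).2.1

lemma fr_r {m : ℕ} (hm : 3 ≤ m) {o : Orientation} (hC : o ∈ Config m)
    (hV : Visited o (0, (m:ℤ)-1)) :
    ∀ x : ℤ, 1-(m:ℤ) ≤ x → x ≤ -1 → o (x, (m:ℤ)-1) 2 = false := by
  intro x h0 h1
  exact (rowStep hm hC h0 h1 (fr_p hm hC hV x (by omega) h1)).2.2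

noncomputable section
open Classical in
/-- frozen values on the outer layer, `d = 0` component -/
noncomputable def F0 (m : ℕ) (v : ℤ × ℤ) : Bool :=
  if v.2 = (m:ℤ)-1 ∧ v.1 ≤ -1 ∧ -(m:ℤ) ≤ v.1 then true
  else if (v.1 = 0 ∧ 0 ≤ v.2 ∧ v.2 ≤ (m:ℤ)-1) ∨ (v.1 = -1 ∧ v.2 = 0) then false else true

open Classical in
noncomputable def F1 (m : ℕ) (v : ℤ × ℤ) : Bool :=
  if v.1 = 0 ∧ -1 ≤ v.2 ∧ v.2 ≤ (m:ℤ)-2 then false else true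

open Classical in
noncomputable def F2 (m : ℕ) (v : ℤ × ℤ) : Bool :=
  if (v.1 = 0 ∧ 0 ≤ v.2 ∧ v.2 ≤ (m:ℤ)-1) ∨ (v.1 = -1 ∧ ((m:ℤ)-1 ≤ v.2 ∧ v.2 ≤ (m:ℤ)))
      ∨ (v.1 ≤ -2 ∧ v.2 = (m:ℤ) ∧ -(m:ℤ) ≤ v.1) then false else true

noncomputable def Fz (m : ℕ) (v : ℤ × ℤ) (d : Fin 3) : Bool :=
  if d = 0 then F0 m v else if d = 1 then F1 m v else F2 m v

lemma Fz0 (m : ℕ) (v : ℤ × ℤ) : Fz m v 0 = F0 m v := by simp [Fz]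
lemma Fz1 (m : ℕ) (v : ℤ × ℤ) : Fz m v 1 = F1 m v := by simp [Fz]
lemma Fz2 (m : ℕ) (v : ℤ × ℤ) : Fz m v 2 = F2 m v := by simp [Fz]

open Classical in
noncomputable def Phi (m : ℕ) (o : Orientation) : Orientation := fun v d =>
  if Incident (m-2) v d then o (v.1 - 1, v.2 + 1) d else true

open Classical in
noncomputable def Psi (m : ℕ) (o : Orientation) : Orientation := fun v d =>
  if Incident (m-2) (v.1 + 1, v.2 - 1) d then o (v.1 + 1, v.2 - 1) d else Fz m v d

lemma phi_pos {m : ℕ} (o : Orientation) {x y : ℤ} {d : Fin 3}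
    (h : Incident (m-2) (x, y) d) : Phi m o (x, y) d = o (x - 1, y + 1) d := by
  simp only [Phi, if_pos h]

lemma phi_neg {m : ℕ} (o : Orientation) {x y : ℤ} {d : Fin 3}
    (h : ¬ Incident (m-2) (x, y) d) : Phi m o (x, y) d = true := by
  simp only [Phi, if_neg h]

lemma psi_pos {m : ℕ} (o : Orientation) {x y : ℤ} {d : Fin 3}
    (h : Incident (m-2) (x + 1, y - 1) d) : Psi m o (x, y) d = o (x + 1, y - 1) d := by
  simp only [Psi, if_pos h]

lemma psi_neg {m : ℕ} (o : Orientation) {x y : ℤ} {d : Fin 3}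
    (h : ¬ Incident (m-2) (x + 1, y - 1) d) : Psi m o (x, y) d = Fz m (x, y) d := by
  simp only [Psi, if_neg h]

end

lemma incident_shift {m : ℕ} (hm : 3 ≤ m) {x y : ℤ} {d : Fin 3}
    (h : Incident (m-2) (x + 1, y - 1) d) : Incident m (x, y) d := by
  rcases fin3 d with rfl | rfl | rfl
  · rw [incident0] at h ⊢; omega
  · rw [incident1] at h ⊢; omega
  · rw [incident2] at h ⊢; omega

lemma Fz_true_of_not_incident {m : ℕ} (hm : 3 ≤ m) {x y : ℤ} {d : Fin 3}
    (h : ¬ Incident m (x, y) d) : Fz m (x, y) d = true := by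
  rcases fin3 d with rfl | rfl | rfl
  · rw [incident0] at h
    rw [Fz0, F0]
    split_ifs with h1 h2 <;> simp_all <;> omega
  · rw [incident1] at h
    rw [Fz1, F1]
    split_ifs with h1 <;> simp_all <;> omega
  · rw [incident2] at h
    rw [Fz2, F2]
    split_ifs with h1 <;> simp_all <;> omega

lemma frozen_outer {m : ℕ} (hm : 3 ≤ m) {o : Orientation} (hC : o ∈ Config m)
    (hV : Visited o (0, (m:ℤ)-1)) :
    ∀ (x y : ℤ) (d : Fin 3), ¬ Incident (m-2) (x + 1, y - 1) d →
      o (x, y) d = Fz m (x, y) d := by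
  intro x y d hni
  obtain ⟨hIce, hE, hN, hD, hZ⟩ := id hC
  rcases fin3 d with rfl | rfl | rfl
  · by_cases hi : Incident m (x, y) 0
    · rw [incident0] at hi; rw [incident0] at hni
      rw [Fz0, F0]
      dsimp only
      split_ifs with h1 h2
      · obtain ⟨e1, e2, e3⟩ := h1
        rw [e1]; exact fr_p hm hC hV x e3 e2
      · rcases h2 with ⟨e1, e2, e3⟩ | ⟨e1, e2⟩
        · rw [e1]; exact (hE y e2 e3).1
        · rw [e1, e2]
          have hd := (hD 0 (le_refl 0) (by omega)).1
          norm_num at hd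
          rcases Bool.eq_false_or_eq_true (o (-1, (0:ℤ)) 0) with hh | hh
          · exact absurd (hd.mp hh) (by omega)
          · exact hh
      · exfalso; omega
    · rw [(hC.2.2.2.2) _ _ hi, Fz_true_of_not_incident hm hi]
  · by_cases hi : Incident m (x, y) 1
    · rw [incident1] at hi; rw [incident1] at hni
      rw [Fz1, F1]
      dsimp only
      split_ifs with h1
      · obtain ⟨e1, e2, e3⟩ := h1
        rw [e1]; exact fr_b hm hC hV y e2 e3
      · have hcase : (y = (m:ℤ)-1 ∧ 1-(m:ℤ) ≤ x ∧ x ≤ 0) ∨ (x = 1-(m:ℤ) ∧ y = (m:ℤ)-2) := by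
          simp only [not_and, not_le] at h1; omega
        rcases hcase with ⟨e1, e2, e3⟩ | ⟨e1, e2⟩
        · rw [e1]; exact (hN x e2 e3).1
        · rw [e1, e2]
          have hd := (hD ((m:ℤ)-1) (by omega) (by omega)).2
          rw [show -((m:ℤ)-1) = 1-(m:ℤ) by ring, show (m:ℤ)-1-1 = (m:ℤ)-2 by ring] at hd
          exact hd.mpr (by omega)
    · rw [(hC.2.2.2.2) _ _ hi, Fz_true_of_not_incident hm hi]
  · by_cases hi : Incident m (x, y) 2
    · rw [incident2] at hi; rw [incident2] at hni
      rw [Fz2, F2]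
      dsimp only
      split_ifs with h1
      · rcases h1 with ⟨e1, e2, e3⟩ | ⟨e1, e2, e3⟩ | ⟨e1, e2, e3⟩
        · rw [e1]; exact (hE y e2 e3).2
        · rcases eq_or_lt_of_le e3 with hy | hy
          · rw [e1, hy]
            have := (hN 0 (by omega) (by omega)).2
            norm_num at this
            exact this
          · rw [e1]; exact fr_c hm hC hV y (by omega) (by omega)
        · have := (hN (x+1) (by omega) (by omega)).2
          rw [show x+1-1 = x by ring] at this
          rw [e2]; exact this
      · exfalso; omega
    · rw [(hC.2.2.2.2) _ _ hi, Fz_true_of_not_incident hm hi]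

lemma inDeg_phi {m : ℕ} (o : Orientation) {x y : ℤ}
    (h : x ≤ 0 ∧ y ≤ ((m-2:ℕ):ℤ)-1 ∧ 0 ≤ x+y) :
    inDeg (Phi m o) (x, y) = inDeg o (x-1, y+1) := by
  rw [inDeg_eq, inDeg_eq]
  rw [phi_pos o (x := x-1) (y := y) (by rw [incident0]; omega),
    phi_pos o (x := x) (y := y-1) (by rw [incident1]; omega),
    phi_pos o (x := x-1) (y := y+1) (by rw [incident2]; omega),
    phi_pos o (x := x) (y := y) (d := 0) (by rw [incident0]; omega),
    phi_pos o (x := x) (y := y) (d := 1) (by rw [incident1]; omega),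
    phi_pos o (x := x) (y := y) (d := 2) (by rw [incident2]; omega),
    show y-1+1 = y+1-1 by ring]

lemma phi_mem {m : ℕ} (hm : 3 ≤ m) {o : Orientation} (hC : o ∈ Config m)
    (hV : Visited o (0, (m:ℤ)-1)) : Phi m o ∈ Config (m-2) := by
  obtain ⟨hIce, hE, hN, hD, hZ⟩ := id hC
  refine ⟨?_, ?_, ?_, ?_, ?_⟩
  · rintro ⟨x, y⟩ hu
    have hu' : x ≤ 0 ∧ y ≤ ((m-2:ℕ):ℤ)-1 ∧ 0 ≤ x+y := hu
    rw [inDeg_phi o hu']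
    exact hIce (x-1, y+1) (by rw [mem_tri]; omega)
  · intro y h0 h1
    constructor
    · rw [phi_pos o (by rw [incident0]; omega), show (0:ℤ)-1 = -1 by norm_num]
      exact fr_a hm hC hV (y+1) (by omega) (by omega)
    · rw [phi_pos o (by rw [incident2]; omega), show (0:ℤ)-1 = -1 by norm_num]
      exact fr_c hm hC hV (y+1) (by omega) (by omega)
  · intro x h0 h1
    constructor
    · rw [phi_pos o (by rw [incident1]; omega), show ((m-2:ℕ):ℤ)-1+1 = (m:ℤ)-2 by omega]
      exact fr_q hm hC hV (x-1) (by omega) (by omega)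
    · rw [phi_pos o (by rw [incident2]; omega), show ((m-2:ℕ):ℤ)+1 = (m:ℤ)-1 by omega]
      exact fr_r hm hC hV (x-1-1) (by omega) (by omega)
  · intro y h0 h1
    constructor
    · rw [phi_pos o (by rw [incident0]; omega)]
      have hd := (hD (y+1) (by omega) (by omega)).1
      rw [show -(y+1)-1 = -y-1-1 by ring] at hd
      rw [hd]; omega
    · rw [phi_pos o (by rw [incident1]; omega)]
      have hd := (hD (y+1) (by omega) (by omega)).2
      rw [show -(y+1) = -y-1 by ring, show (y+1)-1 = y-1+1 by ring] at hd
      rw [hd]; omega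
  · rintro ⟨a, b⟩ d hni
    exact phi_neg o hni

lemma inDeg_psi_inner {m : ℕ} (o : Orientation) {x y : ℤ}
    (h : x ≤ -1 ∧ y ≤ (m:ℤ)-2 ∧ 0 ≤ x+y ∧ 3 ≤ m) :
    inDeg (Psi m o) (x, y) = inDeg o (x+1, y-1) := by
  rw [inDeg_eq, inDeg_eq]
  rw [psi_pos o (x := x-1) (y := y) (by rw [incident0]; omega),
    psi_pos o (x := x) (y := y-1) (by rw [incident1]; omega),
    psi_pos o (x := x-1) (y := y+1) (by rw [incident2]; omega),
    psi_pos o (x := x) (y := y) (d := 0) (by rw [incident0]; omega),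
    psi_pos o (x := x) (y := y) (d := 1) (by rw [incident1]; omega),
    psi_pos o (x := x) (y := y) (d := 2) (by rw [incident2]; omega),
    show x-1+1 = x+1-1 by ring, show y+1-1 = y-1+1 by ring]

lemma psi_ice {m : ℕ} (hm : 3 ≤ m) {o' : Orientation} (hC' : o' ∈ Config (m-2)) :
    IceRule m (Psi m o') := by
  rintro ⟨x, y⟩ hu
  have hu' : x ≤ 0 ∧ y ≤ (m:ℤ)-1 ∧ 0 ≤ x+y := hu
  obtain ⟨hIce', hE', hN', hD', hZ'⟩ := id hC'
  by_cases hx : x = 0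
  · subst hx
    by_cases hy : y = (m:ℤ)-1
    · subst hy
      rw [inDeg_eq, show (0:ℤ)-1 = -1 by norm_num]
      have v1 : Psi m o' (-1, (m:ℤ)-1) 0 = true := by
        rw [psi_neg o' (by rw [incident0]; omega), Fz0, F0]
        dsimp only
        split_ifs <;> first | rfl | (exfalso; omega)
      have v2 : Psi m o' (0, (m:ℤ)-1-1) 1 = false := by
        rw [psi_neg o' (by rw [incident1]; omega), Fz1, F1]
        dsimp only
        split_ifs <;> first | rfl | (exfalso; omega)
      have v3 : Psi m o' (-1, (m:ℤ)-1+1) 2 = false := by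
        rw [psi_neg o' (by rw [incident2]; omega), Fz2, F2]
        dsimp only
        split_ifs <;> first | rfl | (exfalso; omega)
      have v4 : Psi m o' (0, (m:ℤ)-1) 0 = false := by
        rw [psi_neg o' (by rw [incident0]; omega), Fz0, F0]
        dsimp only
        split_ifs <;> first | rfl | (exfalso; omega)
      have v5 : Psi m o' (0, (m:ℤ)-1) 1 = true := by
        rw [psi_neg o' (by rw [incident1]; omega), Fz1, F1]
        dsimp only
        split_ifs <;> first | rfl | (exfalso; omega)
      have v6 : Psi m o' (0, (m:ℤ)-1) 2 = false := by
        rw [psi_neg o' (by rw [incident2]; omega), Fz2, F2]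
        dsimp only
        split_ifs <;> first | rfl | (exfalso; omega)
      rw [v1, v2, v3, v4, v5, v6]
      norm_num
    · -- east column, 0 ≤ y ≤ m-2
      rw [inDeg_eq, show (0:ℤ)-1 = -1 by norm_num]
      have v1 : Psi m o' (-1, y) 0 = false := by
        by_cases h1 : 1 ≤ y
        · rw [psi_pos o' (x := -1) (y := y) (by rw [incident0]; omega),
            show (-1:ℤ)+1 = 0 by norm_num]
          exact (hE' (y-1) (by omega) (by omega)).1
        · rw [psi_neg o' (by rw [incident0]; omega), Fz0, F0]
          dsimp only
          split_ifs <;> first | rfl | (exfalso; omega)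
      have v2 : Psi m o' (0, y-1) 1 = false := by
        rw [psi_neg o' (by rw [incident1]; omega), Fz1, F1]
        dsimp only
        split_ifs <;> first | rfl | (exfalso; omega)
      have v3 : Psi m o' (-1, y+1) 2 = false := by
        by_cases h1 : y ≤ (m:ℤ)-3
        · rw [psi_pos o' (x := -1) (y := y+1) (by rw [incident2]; omega),
            show (-1:ℤ)+1 = 0 by norm_num, show y+1-1 = y by ring]
          exact (hE' y (by omega) (by omega)).2
        · rw [psi_neg o' (by rw [incident2]; omega), Fz2, F2]
          dsimp only
          split_ifs <;> first | rfl | (exfalso; omega)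
      have v4 : Psi m o' (0, y) 0 = false := by
        rw [psi_neg o' (by rw [incident0]; omega), Fz0, F0]
        dsimp only
        split_ifs <;> first | rfl | (exfalso; omega)
      have v5 : Psi m o' (0, y) 1 = false := by
        rw [psi_neg o' (by rw [incident1]; omega), Fz1, F1]
        dsimp only
        split_ifs <;> first | rfl | (exfalso; omega)
      have v6 : Psi m o' (0, y) 2 = false := by
        rw [psi_neg o' (by rw [incident2]; omega), Fz2, F2]
        dsimp only
        split_ifs <;> first | rfl | (exfalso; omega)
      rw [v1, v2, v3, v4, v5, v6]
      norm_num
  · by_cases hy : y = (m:ℤ)-1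
    · subst hy
      -- top row, 1-m ≤ x ≤ -1
      rw [inDeg_eq]
      have v1 : Psi m o' (x-1, (m:ℤ)-1) 0 = true := by
        rw [psi_neg o' (by rw [incident0]; omega), Fz0, F0]
        dsimp only
        split_ifs <;> first | rfl | (exfalso; omega)
      have v2 : Psi m o' (x, (m:ℤ)-1-1) 1 = true := by
        by_cases h1 : 2-(m:ℤ) ≤ x
        · rw [psi_pos o' (x := x) (y := (m:ℤ)-1-1) (by rw [incident1]; omega)]
          have := (hN' (x+1) (by omega) (by omega)).1
          rw [show ((m-2:ℕ):ℤ)-1 = (m:ℤ)-1-1-1 by omega] at this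
          exact this
        · rw [psi_neg o' (by rw [incident1]; omega), Fz1, F1]
          dsimp only
          split_ifs <;> first | rfl | (exfalso; omega)
      have v3 : Psi m o' (x-1, (m:ℤ)-1+1) 2 = false := by
        rw [psi_neg o' (by rw [incident2]; omega), Fz2, F2]
        dsimp only
        split_ifs <;> first | rfl | (exfalso; omega)
      have v4 : Psi m o' (x, (m:ℤ)-1) 0 = true := by
        rw [psi_neg o' (by rw [incident0]; omega), Fz0, F0]
        dsimp only
        split_ifs <;> first | rfl | (exfalso; omega)
      have v5 : Psi m o' (x, (m:ℤ)-1) 1 = true := by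
        rw [psi_neg o' (by rw [incident1]; omega), Fz1, F1]
        dsimp only
        split_ifs <;> first | rfl | (exfalso; omega)
      have v6 : Psi m o' (x, (m:ℤ)-1) 2 = false := by
        by_cases h1 : x ≤ -2
        · rw [psi_pos o' (x := x) (y := (m:ℤ)-1) (by rw [incident2]; omega)]
          have := (hN' (x+2) (by omega) (by omega)).2
          rw [show x+2-1 = x+1 by ring, show ((m-2:ℕ):ℤ) = (m:ℤ)-1-1 by omega] at this
          exact this
        · rw [psi_neg o' (by rw [incident2]; omega), Fz2, F2]
          dsimp only
          split_ifs <;> first | rfl | (exfalso; omega)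
      rw [v1, v2, v3, v4, v5, v6]
      norm_num
    · rw [inDeg_psi_inner o' (by omega)]
      exact hIce' (x+1, y-1) (by rw [mem_tri]; omega)

lemma psi_dwbc3 {m : ℕ} (hm : 3 ≤ m) {o' : Orientation} (hC' : o' ∈ Config (m-2)) :
    DWBC3 m (Psi m o') := by
  obtain ⟨hIce', hE', hN', hD', hZ'⟩ := id hC'
  refine ⟨?_, ?_, ?_, ?_⟩
  · intro y h0 h1
    constructor
    · rw [psi_neg o' (by rw [incident0]; omega), Fz0, F0]
      dsimp only
      split_ifs <;> first | rfl | (exfalso; omega)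
    · rw [psi_neg o' (by rw [incident2]; omega), Fz2, F2]
      dsimp only
      split_ifs <;> first | rfl | (exfalso; omega)
  · intro x h0 h1
    constructor
    · rw [psi_neg o' (by rw [incident1]; omega), Fz1, F1]
      dsimp only
      split_ifs <;> first | rfl | (exfalso; omega)
    · rw [psi_neg o' (by rw [incident2]; omega), Fz2, F2]
      dsimp only
      split_ifs <;> first | rfl | (exfalso; omega)
  · intro y h0 h1
    constructor
    · by_cases hmid : 1 ≤ y ∧ y ≤ (m:ℤ)-2
      · rw [psi_pos o' (x := -y-1) (y := y) (by rw [incident0]; omega)]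
        have hd := (hD' (y-1) (by omega) (by omega)).1
        rw [show -(y-1)-1 = -y-1+1 by ring] at hd
        rw [hd]; omega
      · rw [psi_neg o' (by rw [incident0]; omega), Fz0, F0]
        dsimp only
        split_ifs <;> simp <;> omega
    · by_cases hmid : 1 ≤ y ∧ y ≤ (m:ℤ)-2
      · rw [psi_pos o' (x := -y) (y := y-1) (by rw [incident1]; omega)]
        have hd := (hD' (y-1) (by omega) (by omega)).2
        rw [show -(y-1) = -y+1 by ring] at hd
        rw [hd]; omega
      · rw [psi_neg o' (by rw [incident1]; omega), Fz1, F1]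
        dsimp only
        split_ifs <;> simp <;> omega
  · rintro ⟨a, b⟩ d h
    rw [psi_neg o' (fun hc => h (incident_shift hm hc))]
    exact Fz_true_of_not_incident hm h

lemma psi_stat {m : ℕ} (hm : 3 ≤ m) {o' : Orientation} (hC' : o' ∈ Config (m-2)) :
    HasStat m (Psi m o') m := by
  constructor
  · refine ⟨0, Or.inl ?_⟩
    have hsub0 : ((0:ℤ), (m:ℤ)-1) - dir 0 = (-1, (m:ℤ)-1) := by simp [dir, Prod.ext_iff]
    show Psi m o' ((0, (m:ℤ)-1) - dir 0) 0 = true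
    rw [hsub0, psi_neg o' (by rw [incident0]; omega), Fz0, F0]
    dsimp only
    split_ifs <;> first | rfl | (exfalso; omega)
  · intro j h1 h2
    exact absurd (h1.trans_le h2) (lt_irrefl _)

lemma phi_psi {m : ℕ} (hm : 3 ≤ m) {o' : Orientation} (hC' : o' ∈ Config (m-2)) :
    Phi m (Psi m o') = o' := by
  obtain ⟨hIce', hE', hN', hD', hZ'⟩ := id hC'
  funext v d
  obtain ⟨a, b⟩ := v
  by_cases h : Incident (m-2) (a, b) d
  · rw [phi_pos _ h,
      psi_pos o' (x := a-1) (y := b+1)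
        (by rw [show a-1+1 = a by ring, show b+1-1 = b by ring]; exact h),
      show a-1+1 = a by ring, show b+1-1 = b by ring]
  · rw [phi_neg _ h]
    exact (hZ' _ _ h).symm

lemma psi_phi {m : ℕ} (hm : 3 ≤ m) {o : Orientation} (hC : o ∈ Config m)
    (hV : Visited o (0, (m:ℤ)-1)) : Psi m (Phi m o) = o := by
  funext v d
  obtain ⟨a, b⟩ := v
  by_cases h : Incident (m-2) (a+1, b-1) d
  · rw [psi_pos _ h, phi_pos o h, show a+1-1 = a by ring, show b-1+1 = b by ring]
  · rw [psi_neg _ h]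
    exact (frozen_outer hm hC hV a b d h).symm

theorem Zref_top_eq_Z_sub_two' (m : ℕ) (hm : 3 ≤ m) :
    Zref m m = Z (m - 2) := by
  classical
  set S : Set Orientation := {o ∈ Config m | HasStat m o m} with hS
  have hinj : Set.InjOn (Phi m) S := by
    intro o1 h1 o2 h2 heq
    have e1 := psi_phi hm h1.1 h1.2.1
    have e2 := psi_phi hm h2.1 h2.2.1
    rw [← e1, ← e2, heq]
  have himg : Phi m '' S = Config (m-2) := by
    apply Set.Subset.antisymm
    · rintro _ ⟨o, hS', rfl⟩
      exact phi_mem hm hS'.1 hS'.2.1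
    · intro o' ho'
      exact ⟨Psi m o', ⟨⟨psi_ice hm ho', psi_dwbc3 hm ho'⟩, psi_stat hm ho'⟩, phi_psi hm ho'⟩
  calc Zref m m = S.ncard := rfl
    _ = (Phi m '' S).ncard := (Set.ncard_image_of_injOn hinj).symm
    _ = Z (m-2) := by rw [himg]; rfl

end TwentyV

open TwentyV in
/-- For every integer `m ≥ 3`, the number of DWBC3 configurations of
the 20V model on `T_m` whose statistic equals `m` (the leading coefficient of
`Z_m^{20V3}(τ)`) equals the total number of DWBC3 configurations on `T_{m-2}`. -/
theorem Zref_top_eq_Z_sub_two (m : ℕ) (hm : 3 ≤ m) :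
    TwentyV.Zref m m = TwentyV.Z (m - 2) := by
  exact TwentyV.Zref_top_eq_Z_sub_two' m hm
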